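/- Let D be a weakly connected directed graph and e a bridge of D. Then the extended root polytope Q̃_D is the cone over Q̃_{D−e} with apex x_e (i.e., Q̃_D = conv(Q̃_{D−e} ∪ {x_e}) and x_e is not in the affine hull of Q̃_{D−e}), and h*_{Q̃_D} = h*_{Q̃_{D−e}}. -/

import Mathlib

open Finset Pointwise

noncomputable section

variable {V E ι : Type*}

/-- The vector `x_f ∈ ℝ^V` of an edge `f` with tail `t f` and head `h f`:
`+1` at the head, `-1` at the tail, `0` elsewhere (so `0` for a loop). -/
def xvec [DecidableEq V] (t h : E → V) (f : E) : V → ℝ :=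
  fun v => (if v = h f then 1 else 0) - (if v = t f then 1 else 0)

/-- The extended root polytope of the subgraph with edge set `S`:
`conv({0} ∪ {x_f : f ∈ S})`. -/
def rootPolyOn [DecidableEq V] (t h : E → V) (S : Set E) : Set (V → ℝ) :=
  convexHull ℝ ({0} ∪ (xvec t h '' S))

/-- The underlying (simple) undirected graph of the edges in `S`. -/
def underlyingOn (t h : E → V) (S : Set E) : SimpleGraph V :=
  SimpleGraph.fromRel (fun u v => ∃ f ∈ S, t f = u ∧ h f = v)

/-- A spanning tree: a set of edges whose underlying graph is connected and which
has `|V| - 1` edges. -/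
def IsSpanningTree [Fintype V] (t h : E → V) (T : Finset E) : Prop :=
  (underlyingOn t h ↑T).Connected ∧ T.card + 1 = Fintype.card V

/-- The number of lattice points of the `k`-th dilate of `Q`. -/
def latCount [Fintype ι] (Q : Set (ι → ℝ)) (k : ℕ) : ℕ :=
  Nat.card {p : ι → ℤ // (fun i => (p i : ℝ)) ∈ (k : ℝ) • Q}

/-- The Ehrhart series of `Q` as a formal power series. -/
def ehrSeries [Fintype ι] (Q : Set (ι → ℝ)) : PowerSeries ℤ :=
  PowerSeries.mk fun k => (latCount Q k : ℤ)

/-- The dimension of a polytope: the rank of its vector span. -/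
def pdim (Q : Set (ι → ℝ)) : ℕ := Module.finrank ℝ ↥(vectorSpan ℝ Q)

/-- `p` is the `h^*`-polynomial of `Q`: `(1-t)^{dim Q + 1} · Ehr_Q(t) = p(t)`. -/
def IsHStar [Fintype ι] (Q : Set (ι → ℝ)) (p : Polynomial ℤ) : Prop :=
  (1 - PowerSeries.X) ^ (pdim Q + 1) * ehrSeries Q = PowerSeries.mk fun i => p.coeff i

/-- The `±1` vector of a signed cycle with positive arc `Cp` and negative arc `Cm`. -/
def chiVec [DecidableEq E] (Cp Cm : Finset E) : E → ℝ :=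
  fun f => (if f ∈ Cp then 1 else 0) - (if f ∈ Cm then 1 else 0)

/-- A circulation: an assignment of reals to edges with zero net flow at each vertex. -/
def IsCirculation [Fintype E] [DecidableEq V] (t h : E → V) (φ : E → ℝ) : Prop :=
  ∑ f, φ f • xvec t h f = 0

/-- `(Cp, Cm)` is a signed cycle: the arcs are disjoint, the union is nonempty, the
`±1` vector is a circulation, and the support `Cp ∪ Cm` is minimal among supports of
nonzero circulations (i.e. it is a circuit of the graphic oriented matroid). -/
def IsSignedCycle [Fintype E] [DecidableEq E] [DecidableEq V] (t h : E → V)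
    (Cp Cm : Finset E) : Prop :=
  Disjoint Cp Cm ∧ (Cp ∪ Cm).Nonempty ∧ IsCirculation t h (chiVec Cp Cm) ∧
    ∀ φ : E → ℝ, IsCirculation t h φ → φ ≠ 0 →
      (∀ f, φ f ≠ 0 → f ∈ Cp ∪ Cm) → ∀ f ∈ Cp ∪ Cm, φ f ≠ 0

/-- A circuit signature: a choice, for each cycle, of exactly one of its two
orientations. -/
def IsCircuitSignature [Fintype E] [DecidableEq E] [DecidableEq V] (t h : E → V)
    (σ : Set (Finset E × Finset E)) : Prop :=
  (∀ q ∈ σ, IsSignedCycle t h q.1 q.2) ∧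
    ∀ Cp Cm : Finset E, IsSignedCycle t h Cp Cm → ((Cp, Cm) ∈ σ ↔ (Cm, Cp) ∉ σ)

/-- Acyclicity of a circuit signature: no nontrivial nonnegative combination of the
vectors of the chosen signed cycles vanishes. -/
def IsAcyclicSig [DecidableEq E] (σ : Set (Finset E × Finset E)) : Prop :=
  ∀ (s : Finset (Finset E × Finset E)) (a : Finset E × Finset E → ℝ),
    ↑s ⊆ σ → (∀ q, 0 ≤ a q) → (∃ q ∈ s, a q ≠ 0) →
      ∑ q ∈ s, a q • chiVec q.1 q.2 ≠ 0

/-- A weight function is generic if the two arcs of every cycle have different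
total weights. -/
def GenericWeight [Fintype E] [DecidableEq E] [DecidableEq V] (t h : E → V)
    (w : E → ℝ) : Prop :=
  ∀ Cp Cm : Finset E, IsSignedCycle t h Cp Cm → ∑ f ∈ Cp, w f ≠ ∑ f ∈ Cm, w f

/-- The circuit signature `cir^w`: orient each cycle so that the positive arc has
the larger total `w`-weight. -/
def cirw [Fintype E] [DecidableEq E] [DecidableEq V] (t h : E → V) (w : E → ℝ) :
    Set (Finset E × Finset E) :=
  {q | IsSignedCycle t h q.1 q.2 ∧ ∑ f ∈ q.2, w f < ∑ f ∈ q.1, w f}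

/-- `tree(D,σ)`: spanning trees `T` such that every non-tree edge `f` lies in the
positive arc of the (σ-oriented) fundamental cycle of `f`, i.e. of the unique cycle
contained in `T ∪ {f}`. -/
def treeSet [Fintype V] [Fintype E] [DecidableEq V] [DecidableEq E] (t h : E → V)
    (σ : Set (Finset E × Finset E)) : Set (Finset E) :=
  {T | IsSpanningTree t h T ∧
    ∀ f ∉ T, ∀ Cp Cm : Finset E, (Cp, Cm) ∈ σ → Cp ∪ Cm ⊆ insert f T → f ∈ Cp}

/-- `F` is a face of `Q`: the locus where some linear functional bounded above on `Q`
attains its maximum. -/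
def IsFaceOf (Q F : Set (ι → ℝ)) : Prop :=
  ∃ (l : (ι → ℝ) →ₗ[ℝ] ℝ) (c : ℝ), (∀ y ∈ Q, l y ≤ c) ∧ F = {y ∈ Q | l y = c}

/-- `F` is a facet of `Q`: a face of codimension one. -/
def IsFacetOf (Q F : Set (ι → ℝ)) : Prop :=
  IsFaceOf Q F ∧ pdim F + 1 = pdim Q

end

namespace Stmt18Aux

open Pointwise

variable {V : Type*} [Fintype V]

/-- Lattice points in a bounded set are finite. -/
lemma lat_finite (B : Set (V → ℝ)) (hB : Bornology.IsBounded B) :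
    {p : V → ℤ | (fun v => (p v : ℝ)) ∈ B}.Finite := by
  obtain ⟨C, hC⟩ := isBounded_iff_forall_norm_le.1 hB
  have : {p : V → ℤ | (fun v => (p v : ℝ)) ∈ B} ⊆
      Set.univ.pi (fun _ : V => Set.Icc (-⌈C⌉) ⌈C⌉) := by
    intro p hp v _
    have h1 : |(p v : ℝ)| ≤ C := by
      have := norm_le_pi_norm (fun v => (p v : ℝ)) v
      simpa [Real.norm_eq_abs] using this.trans (hC _ hp)
    have h2 : (|p v| : ℝ) ≤ (⌈C⌉ : ℝ) := by
      push_cast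
      exact h1.trans (Int.le_ceil C)
    have h3 : |p v| ≤ ⌈C⌉ := by exact_mod_cast h2
    exact Set.mem_Icc.2 (abs_le.1 h3)
  exact (Set.Finite.pi (fun _ => Set.finite_Icc _ _)).subset this

/-- Membership in a dilate of a cone `conv (A ∪ {xe})`. -/
lemma mem_dilate_cone (A : Set (V → ℝ)) (hA0 : (0 : V → ℝ) ∈ A) (xe : V → ℝ)
    (k : ℕ) (y : V → ℝ) :
    y ∈ (k : ℝ) • convexHull ℝ (A ∪ {xe}) ↔
      ∃ a : ℝ, 0 ≤ a ∧ a ≤ k ∧ y - a • xe ∈ ((k : ℝ) - a) • convexHull ℝ A := by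
  constructor
  · rintro ⟨q, hq, rfl⟩
    rw [Set.union_singleton, convexHull_insert ⟨0, hA0⟩] at hq
    rw [mem_convexJoin] at hq
    obtain ⟨x, hx, z, hz, hseg⟩ := hq
    rw [Set.mem_singleton_iff] at hx
    obtain ⟨b, c, hb, hc, hbc, rfl⟩ := hseg
    rw [hx]
    refine ⟨k * b, by positivity, ?_, ?_⟩
    · calc (k : ℝ) * b ≤ k * 1 := by
            apply mul_le_mul_of_nonneg_left _ (Nat.cast_nonneg k)
            linarith
        _ = k := mul_one _
    · refine ⟨z, hz, ?_⟩
      have hkc : (k : ℝ) - k * b = k * c := by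
        have : c = 1 - b := by linarith
        rw [this]; ring
      show ((k : ℝ) - k * b) • z = (k : ℝ) • (b • xe + c • z) - (k * b) • xe
      rw [hkc, smul_add, smul_smul, smul_smul]
      abel
  · rintro ⟨a, ha0, hak, z, hz, hzeq⟩
    have hzeq' : ((k : ℝ) - a) • z = y - a • xe := hzeq
    rcases eq_or_lt_of_le (Nat.cast_nonneg (α := ℝ) k) with hk0 | hkpos
    · have hk0 : (k : ℝ) = 0 := hk0.symm
      have ha : a = 0 := le_antisymm (by rw [hk0] at hak; exact hak) ha0
      have hy : y = 0 := by
        rw [ha, hk0, zero_smul, sub_zero, sub_zero, zero_smul] at hzeq'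
        exact hzeq'.symm
      rw [hy, hk0]
      exact ⟨0, subset_convexHull ℝ _ (Or.inl hA0), smul_zero _⟩
    · have hkne : (k : ℝ) ≠ 0 := ne_of_gt hkpos
      refine ⟨(a / k) • xe + (((k : ℝ) - a) / k) • z, ?_, ?_⟩
      · apply convex_convexHull ℝ (A ∪ {xe})
        · exact subset_convexHull ℝ _ (Or.inr rfl)
        · exact convexHull_mono Set.subset_union_left hz
        · positivity
        · apply div_nonneg (by linarith) (le_of_lt hkpos)
        · field_simp
          ring
      · show (k : ℝ) • ((a / k) • xe + (((k : ℝ) - a) / k) • z) = y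
        rw [smul_add, smul_smul, smul_smul, mul_div_cancel₀ _ hkne, mul_div_cancel₀ _ hkne,
          hzeq']
        abel

lemma latCount_eq_ncard (Q : Set (V → ℝ)) (k : ℕ) :
    latCount Q k = {p : V → ℤ | (fun v => (p v : ℝ)) ∈ (k : ℝ) • Q}.ncard := by
  rw [← Nat.card_coe_set_eq]
  rfl

lemma count_zero (A : Set (V → ℝ)) (hA0 : (0 : V → ℝ) ∈ A) (xe : V → ℝ) :
    latCount (convexHull ℝ (A ∪ {xe})) 0 = latCount (convexHull ℝ A) 0 := by
  have hne1 : (convexHull ℝ (A ∪ {xe})).Nonempty := ⟨0, subset_convexHull ℝ _ (Or.inl hA0)⟩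
  have hne2 : (convexHull ℝ A).Nonempty := ⟨0, subset_convexHull ℝ _ hA0⟩
  have hset : ((0 : ℕ) : ℝ) • convexHull ℝ (A ∪ {xe}) = ((0 : ℕ) : ℝ) • convexHull ℝ A := by
    rw [Nat.cast_zero, Set.zero_smul_set hne1, Set.zero_smul_set hne2]
  rw [latCount_eq_ncard, latCount_eq_ncard, hset]

lemma count_step (A : Set (V → ℝ)) (hA0 : (0 : V → ℝ) ∈ A) (hAfin : A.Finite)
    (l : (V → ℝ) →ₗ[ℝ] ℝ) (xe : V → ℝ) (pe : V → ℤ)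
    (hpe : (fun v => ((pe v : ℝ))) = xe)
    (hlA : ∀ y ∈ A, l y = 0) (hlxe : l xe = 1)
    (hlint : ∀ p : V → ℤ, ∃ m : ℤ, l (fun v => (p v : ℝ)) = m) (k : ℕ) :
    latCount (convexHull ℝ (A ∪ {xe})) (k + 1)
      = latCount (convexHull ℝ A) (k + 1) + latCount (convexHull ℝ (A ∪ {xe})) k := by
  classical
  set Q' : Set (V → ℝ) := convexHull ℝ A with hQ'
  set Q : Set (V → ℝ) := convexHull ℝ (A ∪ {xe}) with hQ
  have hker : ∀ y ∈ Q', l y = 0 := by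
    intro y hy
    have hsub : Q' ⊆ (LinearMap.ker l : Set (V → ℝ)) :=
      convexHull_min (fun z hz => LinearMap.mem_ker.2 (hlA z hz)) (LinearMap.ker l).convex
    exact LinearMap.mem_ker.1 (hsub hy)
  have hkerS : ∀ (c : ℝ) (y : V → ℝ), y ∈ c • Q' → l y = 0 := by
    rintro c y ⟨z, hz, rfl⟩
    show l (c • z) = 0
    rw [map_smul, hker z hz, smul_zero]
  have hcast_sub : ∀ p : V → ℤ,
      (fun v => (((p - pe) v : ℤ) : ℝ)) = (fun v => ((p v : ℤ) : ℝ)) - xe := by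
    intro p; funext v; rw [← hpe]; push_cast; simp
  have hcast_add : ∀ p : V → ℤ,
      (fun v => (((p + pe) v : ℤ) : ℝ)) = (fun v => ((p v : ℤ) : ℝ)) + xe := by
    intro p; funext v; rw [← hpe]; push_cast; simp
  have hlval : ∀ (n : ℕ) (y : V → ℝ) (a : ℝ), y - a • xe ∈ ((n : ℝ) - a) • Q' →
      l y = a := by
    intro n y a hmem
    have h0 : l (y - a • xe) = 0 := hkerS _ _ hmem
    rw [map_sub, map_smul, hlxe, smul_eq_mul, mul_one] at h0
    linarith
  have hmain : {p : V → ℤ | (fun v => (p v : ℝ)) ∈ ((k + 1 : ℕ) : ℝ) • Q}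
      = {p : V → ℤ | (fun v => (p v : ℝ)) ∈ ((k + 1 : ℕ) : ℝ) • Q'}
        ∪ ((· + pe) '' {p : V → ℤ | (fun v => (p v : ℝ)) ∈ ((k : ℕ) : ℝ) • Q}) := by
    ext p
    simp only [Set.mem_setOf_eq, Set.mem_union, Set.mem_image]
    constructor
    · intro hp
      obtain ⟨a, ha0, hak, hmem⟩ := (mem_dilate_cone A hA0 xe (k + 1) _).1 hp
      obtain ⟨m, hm⟩ := hlint p
      have ham : a = (m : ℝ) := by rw [← hm]; exact (hlval (k + 1) _ a hmem).symm
      have hm0 : 0 ≤ m := by exact_mod_cast ham ▸ ha0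
      rcases eq_or_lt_of_le hm0 with hm1 | hm1
      · left
        have ha : a = 0 := by rw [ham, ← hm1]; norm_num
        rw [ha, zero_smul, sub_zero, sub_zero] at hmem
        exact hmem
      · right
        refine ⟨p - pe, ?_, by simp⟩
        have ha1 : 1 ≤ a := by rw [ham]; exact_mod_cast hm1
        rw [hcast_sub]
        apply (mem_dilate_cone A hA0 xe k _).2
        refine ⟨a - 1, by linarith, by push_cast at hak ⊢; linarith, ?_⟩
        have hv : (fun v => ((p v : ℤ) : ℝ)) - xe - (a - 1) • xe
            = (fun v => ((p v : ℤ) : ℝ)) - a • xe := by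
          rw [sub_smul, one_smul]; abel
        have hs : ((k : ℕ) : ℝ) - (a - 1) = (((k + 1 : ℕ) : ℝ)) - a := by
          push_cast; ring
        rw [hv, hs]
        exact hmem
    · rintro (hp | ⟨p', hp', rfl⟩)
      · exact Set.smul_set_mono (convexHull_mono Set.subset_union_left) hp
      · obtain ⟨a, ha0, hak, hmem⟩ := (mem_dilate_cone A hA0 xe k _).1 hp'
        rw [hcast_add]
        apply (mem_dilate_cone A hA0 xe (k + 1) _).2
        refine ⟨a + 1, by linarith, by push_cast at hak ⊢; linarith, ?_⟩
        have hv : (fun v => ((p' v : ℤ) : ℝ)) + xe - (a + 1) • xe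
            = (fun v => ((p' v : ℤ) : ℝ)) - a • xe := by
          rw [add_smul, one_smul]; abel
        have hs : (((k + 1 : ℕ) : ℝ)) - (a + 1) = ((k : ℕ) : ℝ) - a := by
          push_cast; ring
        rw [hv, hs]
        exact hmem
  have hdisj : Disjoint {p : V → ℤ | (fun v => (p v : ℝ)) ∈ ((k + 1 : ℕ) : ℝ) • Q'}
      ((· + pe) '' {p : V → ℤ | (fun v => (p v : ℝ)) ∈ ((k : ℕ) : ℝ) • Q}) := by
    rw [Set.disjoint_left]
    rintro p hp ⟨p', hp', rfl⟩
    have h1 : l (fun v => (p' v : ℝ)) + 1 = 0 := by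
      have := hkerS _ _ hp
      rw [show (fun v => (((p' + pe) v : ℤ) : ℝ))
        = (fun v => ((p' v : ℤ) : ℝ)) + xe from hcast_add p'] at this
      rw [map_add, hlxe] at this
      linarith
    obtain ⟨a, ha0, hak, hmem⟩ := (mem_dilate_cone A hA0 xe k _).1 hp'
    have := hlval k _ a hmem
    linarith
  have hQc : IsCompact Q := (hAfin.union (Set.finite_singleton xe)).isCompact_convexHull (𝕜 := ℝ)
  have hQ'c : IsCompact Q' := hAfin.isCompact_convexHull (𝕜 := ℝ)
  have hfin : ∀ (c : ℝ) (B : Set (V → ℝ)), IsCompact B →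
      {p : V → ℤ | (fun v => (p v : ℝ)) ∈ c • B}.Finite := by
    intro c B hB
    exact lat_finite _ ((hB.smul c).isBounded)
  rw [latCount_eq_ncard, latCount_eq_ncard, latCount_eq_ncard, hmain,
    Set.ncard_union_eq hdisj (hfin _ _ hQ'c) ((hfin _ _ hQc).image _),
    Set.ncard_image_of_injective _ (add_left_injective pe)]

lemma ehr_rel (Q Q' : Set (V → ℝ)) (h0 : latCount Q 0 = latCount Q' 0)
    (hstep : ∀ k, latCount Q (k + 1) = latCount Q' (k + 1) + latCount Q k) :
    (1 - PowerSeries.X) * ehrSeries Q = ehrSeries Q' := by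
  rw [ehrSeries, ehrSeries]
  ext n
  rw [sub_mul, one_mul, map_sub, PowerSeries.coeff_mk]
  cases n with
  | zero =>
    simp only [PowerSeries.coeff_zero_eq_constantCoeff, map_mul, PowerSeries.constantCoeff_X,
      zero_mul, sub_zero, PowerSeries.constantCoeff_mk, PowerSeries.coeff_mk]
    exact_mod_cast h0
  | succ k =>
    rw [PowerSeries.coeff_succ_X_mul, PowerSeries.coeff_mk, PowerSeries.coeff_mk]
    have := hstep k
    push_cast [this]
    ring

lemma vspan_eq (s : Set (V → ℝ)) (h0 : (0 : V → ℝ) ∈ s) :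
    vectorSpan ℝ s = Submodule.span ℝ s := by
  apply le_antisymm
  · rw [vectorSpan_def]
    apply Submodule.span_le.2
    rintro y hy
    obtain ⟨x, hx, z, hz, rfl⟩ := hy
    exact sub_mem (Submodule.subset_span hx) (Submodule.subset_span hz)
  · apply Submodule.span_le.2
    intro x hx
    simpa using vsub_mem_vectorSpan ℝ hx h0

lemma span_convexHull (s : Set (V → ℝ)) :
    Submodule.span ℝ (convexHull ℝ s) = Submodule.span ℝ s :=
  le_antisymm
    (Submodule.span_le.2 (convexHull_min Submodule.subset_span (Submodule.span ℝ s).convex))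
    (Submodule.span_mono (subset_convexHull ℝ s))

lemma pdim_cone (A : Set (V → ℝ)) (hA0 : (0 : V → ℝ) ∈ A)
    (l : (V → ℝ) →ₗ[ℝ] ℝ) (xe : V → ℝ)
    (hlA : ∀ y ∈ A, l y = 0) (hlxe : l xe = 1) :
    pdim (convexHull ℝ (A ∪ {xe})) = pdim (convexHull ℝ A) + 1 := by
  have h0Q : (0 : V → ℝ) ∈ convexHull ℝ (A ∪ {xe}) :=
    subset_convexHull ℝ _ (Or.inl hA0)
  have h0Q' : (0 : V → ℝ) ∈ convexHull ℝ A := subset_convexHull ℝ _ hA0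
  rw [pdim, pdim, vspan_eq _ h0Q, vspan_eq _ h0Q', span_convexHull, span_convexHull,
    Submodule.span_union]
  set W : Submodule ℝ (V → ℝ) := Submodule.span ℝ A with hW
  set U : Submodule ℝ (V → ℝ) := Submodule.span ℝ ({xe} : Set (V → ℝ)) with hU
  have hWker : W ≤ LinearMap.ker l :=
    Submodule.span_le.2 (fun z hz => LinearMap.mem_ker.2 (hlA z hz))
  have hinf : W ⊓ U = ⊥ := by
    rw [eq_bot_iff]
    rintro y ⟨hyW, hyU⟩
    obtain ⟨c, rfl⟩ := Submodule.mem_span_singleton.1 hyU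
    have : l (c • xe) = 0 := LinearMap.mem_ker.1 (hWker hyW)
    rw [map_smul, hlxe, smul_eq_mul, mul_one] at this
    simp [this]
  have hxe0 : xe ≠ 0 := by
    intro hx
    rw [hx, map_zero] at hlxe
    exact one_ne_zero hlxe.symm
  have := Submodule.finrank_sup_add_finrank_inf_eq W U
  rw [hinf, finrank_bot, add_zero, finrank_span_singleton hxe0] at this
  exact this

end Stmt18Aux

/-- if `e` is a bridge of the weakly connected digraph `D`, then
`Q̃_D` is the cone over `Q̃_{D-e}` with apex `x_e` (it equals
`conv(Q̃_{D-e} ∪ {x_e})` and `x_e` is not in the affine hull of `Q̃_{D-e}`), and the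
two polytopes have the same `h^*`-polynomial. -/



theorem stmt18 {V E : Type*} [Fintype V] [Fintype E] [DecidableEq V]
    (t h : E → V) (hconn : (underlyingOn t h Set.univ).Connected) (e : E)
    (hbridge : ¬(underlyingOn t h {f | f ≠ e}).Connected) :
    rootPolyOn t h Set.univ =
      convexHull ℝ (rootPolyOn t h {f | f ≠ e} ∪ {xvec t h e}) ∧
    xvec t h e ∉ affineSpan ℝ (rootPolyOn t h {f | f ≠ e}) ∧
    (∀ p q : Polynomial ℤ,
      IsHStar (rootPolyOn t h Set.univ) p →
      IsHStar (rootPolyOn t h {f | f ≠ e}) q → p = q) := by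
  classical
  obtain ⟨hpre, hne⟩ := id hconn
  set G' := underlyingOn t h {f | f ≠ e} with hG'def
  set xe := xvec t h e with hxedef
  set S : Set V := {v | G'.Reachable (h e) v} with hSdef
  -- graph facts
  have hsame : ∀ f : E, f ≠ e → ((h f) ∈ S ↔ (t f) ∈ S) := by
    intro f hf
    by_cases hne' : t f = h f
    · rw [hne']
    · have hadj : G'.Adj (t f) (h f) := by
        rw [hG'def, underlyingOn, SimpleGraph.fromRel_adj]
        exact ⟨hne', Or.inl ⟨f, hf, rfl, rfl⟩⟩
      constructor
      · intro hh
        exact hh.trans hadj.symm.reachable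
      · intro ht
        exact ht.trans hadj.reachable
  have hhe : h e ∈ S := SimpleGraph.Reachable.refl _
  have hte : t e ∉ S := by
    intro htemem
    apply hbridge
    have hstep : ∀ u v : V, (underlyingOn t h Set.univ).Adj u v → G'.Reachable u v := by
      intro u v huv
      rw [underlyingOn, SimpleGraph.fromRel_adj] at huv
      obtain ⟨hne', hcase⟩ := huv
      have hrte : G'.Reachable (t e) (h e) := htemem.symm
      rcases hcase with ⟨f, -, rfl, rfl⟩ | ⟨f, -, rfl, rfl⟩
      · by_cases hfe : f = e
        · subst hfe; exact hrte
        · exact SimpleGraph.Adj.reachable (by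
            rw [hG'def, underlyingOn, SimpleGraph.fromRel_adj]
            exact ⟨hne', Or.inl ⟨f, hfe, rfl, rfl⟩⟩)
      · by_cases hfe : f = e
        · subst hfe; exact hrte.symm
        · exact (SimpleGraph.Adj.reachable (by
            rw [hG'def, underlyingOn, SimpleGraph.fromRel_adj]
            exact ⟨fun hh => hne' hh.symm, Or.inl ⟨f, hfe, rfl, rfl⟩⟩)).symm
    have hpre' : G'.Preconnected := by
      intro u v
      obtain ⟨w⟩ := hpre u v
      induction w with
      | nil => exact SimpleGraph.Reachable.refl _
      | cons ha p ih => exact (hstep _ _ ha).trans ih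
    exact ⟨hpre'⟩
  -- the linear functional
  set Sfin : Finset V := Finset.univ.filter (· ∈ S) with hSfin
  set l : (V → ℝ) →ₗ[ℝ] ℝ :=
    { toFun := fun y => ∑ v ∈ Sfin, y v
      map_add' := by intro y z; simp [Finset.sum_add_distrib]
      map_smul' := by intro c y; simp [Finset.mul_sum] } with hldef
  have hl_apply : ∀ y : V → ℝ, l y = ∑ v ∈ Sfin, y v := fun _ => rfl
  have hlind : ∀ c : V, (∑ v ∈ Sfin, (if v = c then (1 : ℝ) else 0))
      = if c ∈ S then 1 else 0 := by
    intro c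
    rw [Finset.sum_ite_eq' Sfin c (fun _ => (1 : ℝ))]
    simp [hSfin]
  have hlx : ∀ f : E, l (xvec t h f)
      = (if h f ∈ S then (1 : ℝ) else 0) - (if t f ∈ S then 1 else 0) := by
    intro f
    rw [hl_apply]
    unfold xvec
    rw [Finset.sum_sub_distrib, hlind, hlind]
  have hlxe : l xe = 1 := by
    rw [hxedef, hlx]
    simp [hhe, hte]
  have hlf : ∀ f : E, f ≠ e → l (xvec t h f) = 0 := by
    intro f hf
    rw [hlx]
    by_cases hc : t f ∈ S
    · simp [hc, (hsame f hf).2 hc]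
    · have hh : h f ∉ S := fun hh2 => hc ((hsame f hf).1 hh2)
      simp [hc, hh]
  have hlint : ∀ p : V → ℤ, ∃ m : ℤ, l (fun v => (p v : ℝ)) = (m : ℝ) := by
    intro p
    refine ⟨∑ v ∈ Sfin, p v, ?_⟩
    rw [hl_apply]
    push_cast
    rfl
  -- the base set
  set A : Set (V → ℝ) := {0} ∪ (xvec t h '' {f | f ≠ e}) with hAdef
  have hA0 : (0 : V → ℝ) ∈ A := Or.inl rfl
  have hAfin : A.Finite :=
    (Set.finite_singleton 0).union ((Set.toFinite {f : E | f ≠ e}).image _)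
  have hlA : ∀ y ∈ A, l y = 0 := by
    rintro y (hy | ⟨f, hf, rfl⟩)
    · rw [Set.mem_singleton_iff] at hy
      rw [hy, map_zero]
    · exact hlf f hf
  have hQeq : rootPolyOn t h Set.univ = convexHull ℝ (A ∪ {xe}) := by
    rw [rootPolyOn, hAdef]
    congr 1
    have huniv : (Set.univ : Set E) = {f | f ≠ e} ∪ {e} := by
      ext f
      by_cases hf : f = e <;> simp [hf]
    rw [huniv, Set.image_union, Set.image_singleton, hxedef, Set.union_assoc]
  have hQ'eq : rootPolyOn t h {f | f ≠ e} = convexHull ℝ A := rfl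
  -- the integral apex
  set pe : V → ℤ := fun v => (if v = h e then 1 else 0) - (if v = t e then 1 else 0)
    with hpedef
  have hpe : (fun v => ((pe v : ℤ) : ℝ)) = xe := by
    funext v
    show (((if v = h e then (1 : ℤ) else 0) - (if v = t e then 1 else 0) : ℤ) : ℝ)
      = (if v = h e then (1 : ℝ) else 0) - (if v = t e then 1 else 0)
    push_cast
    split_ifs <;> norm_num
  refine ⟨?_, ?_, ?_⟩
  · -- part 1
    rw [hQeq, hQ'eq, convexHull_convexHull_union_left]
  · -- part 2
    intro hmem
    have hsub : rootPolyOn t h {f | f ≠ e} ⊆ (LinearMap.ker l : Set (V → ℝ)) := by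
      rw [hQ'eq]
      exact convexHull_min (fun z hz => LinearMap.mem_ker.2 (hlA z hz))
        (LinearMap.ker l).convex
    have hle : affineSpan ℝ (rootPolyOn t h {f | f ≠ e})
        ≤ (LinearMap.ker l).toAffineSubspace := affineSpan_le.2 hsub
    have : l xe = 0 := LinearMap.mem_ker.1 (Submodule.mem_toAffineSubspace.1 (hle hmem))
    rw [hlxe] at this
    exact one_ne_zero this
  · -- part 3
    intro p q hp hq
    have hstep : ∀ k, latCount (rootPolyOn t h Set.univ) (k + 1)
        = latCount (rootPolyOn t h {f | f ≠ e}) (k + 1)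
          + latCount (rootPolyOn t h Set.univ) k := by
      intro k
      rw [hQeq, hQ'eq]
      exact Stmt18Aux.count_step A hA0 hAfin l xe pe hpe hlA hlxe hlint k
    have h0 : latCount (rootPolyOn t h Set.univ) 0
        = latCount (rootPolyOn t h {f | f ≠ e}) 0 := by
      rw [hQeq, hQ'eq]
      exact Stmt18Aux.count_zero A hA0 xe
    have hehr : (1 - PowerSeries.X) * ehrSeries (rootPolyOn t h Set.univ)
        = ehrSeries (rootPolyOn t h {f | f ≠ e}) :=
      Stmt18Aux.ehr_rel _ _ h0 hstep
    have hd : pdim (rootPolyOn t h Set.univ) = pdim (rootPolyOn t h {f | f ≠ e}) + 1 := by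
      rw [hQeq, hQ'eq]
      exact Stmt18Aux.pdim_cone A hA0 l xe hlA hlxe
    rw [IsHStar] at hp hq
    have hkey : (PowerSeries.mk fun i => (p.coeff i : ℤ))
        = PowerSeries.mk fun i => q.coeff i := by
      rw [← hp, ← hq, hd]
      calc (1 - PowerSeries.X) ^ (pdim (rootPolyOn t h {f | f ≠ e}) + 1 + 1)
            * ehrSeries (rootPolyOn t h Set.univ)
          = (1 - PowerSeries.X) ^ (pdim (rootPolyOn t h {f | f ≠ e}) + 1)
            * ((1 - PowerSeries.X) * ehrSeries (rootPolyOn t h Set.univ)) := by ring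
        _ = (1 - PowerSeries.X) ^ (pdim (rootPolyOn t h {f | f ≠ e}) + 1)
            * ehrSeries (rootPolyOn t h {f | f ≠ e}) := by rw [hehr]
    apply Polynomial.ext
    intro n
    have := congrArg (PowerSeries.coeff n) hkey
    simpa using this
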